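/- Let m ≥ 1 be an integer and let t ∈ ℂ with 0 < |t| < 1. Then (1/(2πi)) ∮_{|z|=1} [ (1 − z t^m) ∏_{j=1}^{m} (1 − t^j)² ∏_{i=1}^{∞} (1 − t^i)² (1 − t^i/z)² ]^{−1} dz/z = ∏_{i=1}^{∞} (1 − t^i)^{−4}. (For |t| < 1 the infinite products converge and the integrand is continuous and nonvanishing on the circle |z| = 1, so the integral is well defined.) -/

import Mathlib

open scoped Real

open Complex Metric

/-- Inversion `z ↦ z⁻¹` in a circle integral of the form `∮ F z / z` over the unit circle. -/
lemma aux_inv_circleIntegral (F G : ℂ → ℂ)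
    (h : ∀ z : ℂ, ‖z‖ = 1 → F z⁻¹ = G z) :
    (∮ z in C(0, 1), F z / z) = ∮ z in C(0, 1), G z / z := by
  have h0 : ∀ θ : ℝ, circleMap 0 1 θ ≠ 0 := fun θ => by
    simpa using circleMap_ne_center (R := (1:ℝ)) one_ne_zero (θ := θ)
  have habs : ∀ θ : ℝ, ‖circleMap 0 1 θ‖ = 1 := fun θ => by
    simpa using norm_circleMap_zero 1 θ
  have hkey : ∀ (H : ℂ → ℂ) (θ : ℝ),
      deriv (circleMap 0 1) θ • (H (circleMap 0 1 θ) / circleMap 0 1 θ)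
        = Complex.I * H (circleMap 0 1 θ) := by
    intro H θ
    rw [deriv_circleMap, smul_eq_mul]
    field_simp [h0 θ]
  have hinv : ∀ θ : ℝ, (circleMap 0 1 θ)⁻¹ = circleMap 0 1 (-θ) := by
    intro θ
    simp only [circleMap, zero_add, Complex.ofReal_one, one_mul]
    rw [← Complex.exp_neg]
    congr 1
    push_cast
    ring
  simp only [circleIntegral]
  calc
    (∫ θ in (0:ℝ)..(2*π), deriv (circleMap 0 1) θ • (F (circleMap 0 1 θ) / circleMap 0 1 θ))
        = ∫ θ in (0:ℝ)..(2*π), Complex.I * G (circleMap 0 1 (-θ)) := by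
          apply intervalIntegral.integral_congr
          intro θ _
          show deriv (circleMap 0 1) θ • (F (circleMap 0 1 θ) / circleMap 0 1 θ)
            = Complex.I * G (circleMap 0 1 (-θ))
          rw [hkey F θ]
          have := h (circleMap 0 1 θ)⁻¹ (by rw [norm_inv, habs θ]; norm_num)
          rw [inv_inv] at this
          rw [this, hinv]
    _ = ∫ θ in (0:ℝ)..(2*π), Complex.I * G (circleMap 0 1 θ) := by
          have h2 := intervalIntegral.integral_comp_sub_left (a := 0) (b := 2*π)
            (fun x => Complex.I * G (circleMap 0 1 (-x))) (2*π)
          simp only [sub_self, sub_zero] at h2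
          rw [← h2]
          apply intervalIntegral.integral_congr
          intro θ _
          show Complex.I * G (circleMap 0 1 (-(2*π - θ))) = Complex.I * G (circleMap 0 1 θ)
          congr 1
          rw [neg_sub, show θ - 2*π = θ - 2*π from rfl, (periodic_circleMap 0 1).sub_eq θ]
    _ = ∫ θ in (0:ℝ)..(2*π), deriv (circleMap 0 1) θ • (G (circleMap 0 1 θ) / circleMap 0 1 θ) := by
          apply intervalIntegral.integral_congr
          intro θ _
          exact (hkey G θ).symm

/-- The log of an individual factor of the infinite product. -/
noncomputable def tcLog (t : ℂ) (i : ℕ) (z : ℂ) : ℂ :=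
  2 * (Complex.log (1 - t ^ (i + 1)) + Complex.log (1 - t ^ (i + 1) * z))

/-- The sum of the logs. -/
noncomputable def tcS (t : ℂ) (z : ℂ) : ℂ := ∑' i, tcLog t i z

/-- The holomorphic function to which the Cauchy integral formula is applied. -/
noncomputable def tcF (t : ℂ) (m : ℕ) (z : ℂ) : ℂ :=
  ((∏ j ∈ Finset.Icc 1 m, (1 - t ^ j) ^ 2) *
    ∏' i : ℕ, ((1 - t ^ (i + 1)) ^ 2 * (1 - t ^ (i + 1) * z) ^ 2))⁻¹

theorem tower_constant_coefficient_integral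
    (m : ℕ) (hm : 1 ≤ m) (t : ℂ) (ht0 : 0 < ‖t‖) (ht1 : ‖t‖ < 1) :
    (2 * (Real.pi : ℂ) * Complex.I)⁻¹ *
      (∮ z in C(0, 1),
        ((1 - z * t ^ m) * (∏ j ∈ Finset.Icc 1 m, (1 - t ^ j) ^ 2) *
            ∏' i : ℕ, ((1 - t ^ (i + 1)) ^ 2 * (1 - t ^ (i + 1) / z) ^ 2))⁻¹ / z)
    = ∏' i : ℕ, ((1 - t ^ (i + 1)) ^ 4)⁻¹ := by
  set q : ℝ := ‖t‖ with hq
  set r : ℝ := (1 + q⁻¹) / 2 with hrdef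
  have hq1inv : 1 < q⁻¹ := one_lt_inv₀ ht0 |>.mpr ht1
  have hr1 : 1 < r := by rw [hrdef]; linarith
  have hr0 : 0 < r := by linarith
  have hqr : q * r < 1 := by
    rw [hrdef]
    have : q * q⁻¹ = 1 := mul_inv_cancel₀ (ne_of_gt ht0)
    nlinarith
  -- basic facts
  have habsp : ∀ i : ℕ, ‖t ^ (i + 1)‖ ≤ q := by
    intro i
    rw [norm_pow]
    calc q ^ (i + 1) = q ^ i * q := by ring
    _ ≤ 1 * q := by
        have : q ^ i ≤ 1 := pow_le_one₀ ht0.le ht1.le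
        nlinarith
    _ = q := one_mul q
  have hslit : ∀ w : ℂ, ‖w‖ < 1 → 1 - w ∈ Complex.slitPlane := by
    intro w hw
    rw [Complex.mem_slitPlane_iff]
    left
    have h1 := Complex.abs_re_le_norm w
    have : w.re < 1 := lt_of_le_of_lt (le_trans (le_abs_self _) h1) hw
    simp only [Complex.sub_re, Complex.one_re]
    linarith
  have hne1 : ∀ w : ℂ, ‖w‖ < 1 → 1 - w ≠ 0 := by
    intro w hw
    exact Complex.slitPlane_ne_zero (hslit w hw)
  have hne : ∀ i : ℕ, (1 : ℂ) - t ^ (i + 1) ≠ 0 :=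
    fun i => hne1 _ (lt_of_le_of_lt (habsp i) ht1)
  have hgeom : Summable (fun i : ℕ => q ^ (i + 1)) := by
    simp only [pow_succ]
    exact (summable_geometric_of_lt_one ht0.le ht1).mul_right q
  -- bound for the logarithm
  have hlogb : ∀ w : ℂ, ‖w‖ ≤ q →
      ‖Complex.log (1 - w)‖ ≤ ((1 - q)⁻¹ / 2 + 1) * ‖w‖ := by
    intro w hw
    have hw1 : ‖-w‖ < 1 := by
      rw [norm_neg]
      exact lt_of_le_of_lt hw ht1
    have hb := Complex.norm_log_one_add_le hw1
    rw [← sub_eq_add_neg] at hb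
    rw [norm_neg] at hb
    have hnw : ‖w‖ = ‖w‖ := rfl
    have hwle : ‖w‖ ≤ q := by rw [hnw]; exact hw
    have hw0 : (0:ℝ) ≤ ‖w‖ := norm_nonneg w
    have hiq : (0:ℝ) < 1 - q := by linarith
    have hinv_le : (1 - ‖w‖)⁻¹ ≤ (1 - q)⁻¹ := by
      apply inv_anti₀ hiq
      linarith
    have hsq : ‖w‖ ^ 2 ≤ ‖w‖ := by nlinarith [hwle, ht1]
    calc ‖Complex.log (1 - w)‖ ≤ ‖w‖ ^ 2 * (1 - ‖w‖)⁻¹ / 2 + ‖w‖ := hb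
    _ ≤ ‖w‖ * (1 - q)⁻¹ / 2 + ‖w‖ := by
        have h1 : ‖w‖ ^ 2 * (1 - ‖w‖)⁻¹ ≤ ‖w‖ * (1 - q)⁻¹ := by
          apply mul_le_mul hsq hinv_le (inv_nonneg.mpr (by linarith)) hw0
        linarith
    _ = ((1 - q)⁻¹ / 2 + 1) * ‖w‖ := by ring
    _ = ((1 - q)⁻¹ / 2 + 1) * ‖w‖ := by rw [hnw]
  have hsumlog : Summable (fun i : ℕ => Complex.log (1 - t ^ (i + 1))) := by
    apply Summable.of_norm_bounded (g := fun i => ((1 - q)⁻¹ / 2 + 1) * q ^ (i + 1))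
      (hgeom.mul_left _)
    intro i
    calc ‖Complex.log (1 - t ^ (i+1))‖ ≤ ((1 - q)⁻¹/2 + 1) * ‖t ^ (i+1)‖ :=
          hlogb _ (habsp i)
    _ ≤ ((1 - q)⁻¹/2 + 1) * q ^ (i + 1) := by
        have h2 : ‖t ^ (i+1)‖ = q ^ (i+1) := by rw [norm_pow]
        rw [h2]
  have hsum0 : Summable (fun i => tcLog t i 0) := by
    have : (fun i => tcLog t i 0) = fun i => 2 * Complex.log (1 - t ^ (i + 1)) := by
      funext i
      simp [tcLog, Complex.log_one]
    rw [this]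
    exact hsumlog.mul_left 2
  -- derivative facts
  have hu : Summable (fun i : ℕ => 2 * q ^ (i + 1) / (1 - q * r)) := by
    apply Summable.div_const
    exact hgeom.mul_left 2
  have habsz : ∀ (i : ℕ) (z : ℂ), z ∈ ball (0:ℂ) r → ‖t ^ (i + 1) * z‖ < 1 := by
    intro i z hz
    rw [mem_ball_zero_iff] at hz
    rw [norm_mul]
    calc ‖t ^ (i+1)‖ * ‖z‖ ≤ q * r := by
          apply mul_le_mul (habsp i) (le_of_lt hz) (norm_nonneg z) ht0.le
    _ < 1 := hqr
  have hDeriv : ∀ (i : ℕ) (z : ℂ), z ∈ ball (0:ℂ) r →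
      HasDerivAt (tcLog t i) (2 * (-(t ^ (i + 1)) / (1 - t ^ (i + 1) * z))) z := by
    intro i z hz
    have h1 : HasDerivAt (fun w : ℂ => 1 - t ^ (i + 1) * w) (-(t ^ (i + 1))) z := by
      simpa using ((hasDerivAt_id z).const_mul (t ^ (i + 1))).const_sub 1
    have h2 := h1.clog (hslit _ (habsz i z hz))
    have h3 := (h2.const_add (Complex.log (1 - t ^ (i + 1)))).const_mul (2:ℂ)
    exact h3
  have hbound : ∀ (i : ℕ) (z : ℂ), z ∈ ball (0:ℂ) r →
      ‖2 * (-(t ^ (i + 1)) / (1 - t ^ (i + 1) * z))‖ ≤ 2 * q ^ (i + 1) / (1 - q * r) := by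
    intro i z hz
    rw [mem_ball_zero_iff] at hz
    have hden : 1 - q * r ≤ ‖1 - t ^ (i + 1) * z‖ := by
      have h1 : ‖t ^ (i+1) * z‖ ≤ q * r := by
        rw [norm_mul]
        exact mul_le_mul (habsp i) (le_of_lt hz) (norm_nonneg z) ht0.le
      have h2 := norm_sub_norm_le (1 : ℂ) (t ^ (i+1) * z)
      simp only [norm_one] at h2
      calc 1 - q * r ≤ 1 - ‖t ^ (i+1) * z‖ := by linarith
      _ ≤ ‖1 - t ^ (i+1) * z‖ := h2
    have hden0 : (0:ℝ) < 1 - q * r := by linarith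
    rw [norm_mul, norm_div, norm_neg]
    have h2n : ‖(2:ℂ)‖ = 2 := by norm_num
    have hnum : ‖t ^ (i+1)‖ = q ^ (i+1) := by rw [norm_pow]
    rw [h2n, hnum, mul_div_assoc]
    have hA : (0:ℝ) < ‖1 - t ^ (i + 1) * z‖ := lt_of_lt_of_le hden0 hden
    have h3 : q ^ (i+1) / ‖1 - t ^ (i+1) * z‖ ≤ q ^ (i+1) / (1 - q * r) := by
      rw [div_le_div_iff₀ hA hden0]
      exact mul_le_mul_of_nonneg_left hden (by positivity)
    linarith
  have h0mem : (0:ℂ) ∈ ball (0:ℂ) r := mem_ball_self hr0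
  have hSsum : ∀ z ∈ ball (0:ℂ) r, HasSum (fun i => tcLog t i z) (tcS t z) := by
    intro z hz
    exact (summable_of_summable_hasDerivAt_of_isPreconnected hu isOpen_ball
      (convex_ball (0:ℂ) r).isPreconnected hDeriv hbound h0mem hsum0 hz).hasSum
  have hSdiff : DifferentiableOn ℂ (tcS t) (ball (0:ℂ) r) := by
    intro z hz
    exact (hasDerivAt_tsum_of_isPreconnected hu isOpen_ball
      (convex_ball (0:ℂ) r).isPreconnected hDeriv hbound h0mem hsum0 hz).differentiableAt.differentiableWithinAt
  -- exp of the log terms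
  have hExp : ∀ (i : ℕ) (z : ℂ), ‖t ^ (i + 1) * z‖ < 1 →
      Complex.exp (tcLog t i z) = (1 - t ^ (i + 1)) ^ 2 * (1 - t ^ (i + 1) * z) ^ 2 := by
    intro i z hz
    have hb : (1:ℂ) - t ^ (i + 1) * z ≠ 0 := hne1 _ hz
    have harr : tcLog t i z = (Complex.log (1 - t ^ (i+1)) + Complex.log (1 - t ^ (i+1)))
        + (Complex.log (1 - t ^ (i+1) * z) + Complex.log (1 - t ^ (i+1) * z)) := by
      simp only [tcLog]; ring
    rw [harr, Complex.exp_add, Complex.exp_add, Complex.exp_add,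
      Complex.exp_log (hne i), Complex.exp_log hb]
    ring
  have hQeq : ∀ z ∈ ball (0:ℂ) r,
      (∏' i : ℕ, ((1 - t ^ (i + 1)) ^ 2 * (1 - t ^ (i + 1) * z) ^ 2))
        = Complex.exp (tcS t z) := by
    intro z hz
    have hp := (hSsum z hz).cexp
    have heq : (Complex.exp ∘ fun i => tcLog t i z)
        = fun i => (1 - t ^ (i + 1)) ^ 2 * (1 - t ^ (i + 1) * z) ^ 2 :=
      funext fun i => hExp i z (habsz i z hz)
    rw [heq] at hp
    exact hp.tprod_eq
  -- P and its nonvanishing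
  have hP0 : (∏ j ∈ Finset.Icc 1 m, (1 - t ^ j) ^ 2) ≠ 0 := by
    apply Finset.prod_ne_zero_iff.mpr
    intro j hj
    have hj1 : 1 ≤ j := (Finset.mem_Icc.mp hj).1
    obtain ⟨k, hk⟩ := Nat.exists_eq_add_of_le hj1
    apply pow_ne_zero
    have : j = k + 1 := by omega
    rw [this]
    exact hne k
  -- differentiability of tcF
  have hFdiff : DiffContOnCl ℂ (tcF t m) (ball (0:ℂ) 1) := by
    have hg : DifferentiableOn ℂ
        (fun z => ((∏ j ∈ Finset.Icc 1 m, (1 - t ^ j) ^ 2) * Complex.exp (tcS t z))⁻¹)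
        (ball (0:ℂ) r) := by
      apply DifferentiableOn.inv
      · exact (differentiableOn_const _).mul hSdiff.cexp
      · intro z _
        exact mul_ne_zero hP0 (Complex.exp_ne_zero _)
    have hdr : DifferentiableOn ℂ (tcF t m) (ball (0:ℂ) r) := by
      apply hg.congr
      intro z hz
      simp only [tcF]
      rw [hQeq z hz]
    apply DifferentiableOn.diffContOnCl
    apply hdr.mono
    rw [closure_ball (0:ℂ) one_ne_zero]
    exact closedBall_subset_ball hr1
  have htm : ‖t ^ m‖ < 1 := by
    rw [norm_pow]
    exact pow_lt_one₀ ht0.le ht1 (by omega)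
  have hw : t ^ m ∈ ball (0:ℂ) 1 := by rwa [mem_ball_zero_iff]
  have htmr : t ^ m ∈ ball (0:ℂ) r := by
    rw [mem_ball_zero_iff]
    exact lt_trans htm hr1
  -- Cauchy integral formula
  have hCau := hFdiff.two_pi_i_inv_smul_circleIntegral_sub_inv_smul hw
  -- transform the integral
  have hstep : (∮ z in C(0, 1),
        ((1 - z * t ^ m) * (∏ j ∈ Finset.Icc 1 m, (1 - t ^ j) ^ 2) *
            ∏' i : ℕ, ((1 - t ^ (i + 1)) ^ 2 * (1 - t ^ (i + 1) / z) ^ 2))⁻¹ / z)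
      = ∮ z in C(0, 1), (z - t ^ m)⁻¹ • tcF t m z := by
    refine (aux_inv_circleIntegral _ (fun z => z * ((z - t ^ m)⁻¹ • tcF t m z)) ?_).trans ?_
    · intro z hz
      have hz0 : z ≠ 0 := by
        intro h
        rw [h] at hz
        simp at hz
      show ((1 - z⁻¹ * t ^ m) * (∏ j ∈ Finset.Icc 1 m, (1 - t ^ j) ^ 2) *
            ∏' i : ℕ, ((1 - t ^ (i + 1)) ^ 2 * (1 - t ^ (i + 1) / z⁻¹) ^ 2))⁻¹
          = z * ((z - t ^ m)⁻¹ • tcF t m z)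
      have hprod : (∏' i : ℕ, ((1 - t ^ (i + 1)) ^ 2 * (1 - t ^ (i + 1) / z⁻¹) ^ 2))
          = ∏' i : ℕ, ((1 - t ^ (i + 1)) ^ 2 * (1 - t ^ (i + 1) * z) ^ 2) := by
        apply tprod_congr
        intro i
        rw [show (t:ℂ) ^ (i+1) / z⁻¹ = t ^ (i+1) * z from by rw [div_eq_mul_inv, inv_inv]]
      have h1 : (1 : ℂ) - z⁻¹ * t ^ m = z⁻¹ * (z - t ^ m) := by
        field_simp
      rw [hprod, h1, smul_eq_mul]
      simp only [tcF]
      rw [mul_inv, mul_inv, mul_inv, inv_inv]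
      ring
    · apply circleIntegral.integral_congr (by norm_num)
      intro z hz
      have hz0 : z ≠ 0 := by
        intro h
        subst h
        simp at hz
      show z * ((z - t ^ m)⁻¹ • tcF t m z) / z = (z - t ^ m)⁻¹ • tcF t m z
      rw [mul_comm, mul_div_assoc, div_self hz0, mul_one]
  -- evaluate tcF at t^m
  have hFval : tcF t m (t ^ m) = ∏' i : ℕ, ((1 - t ^ (i + 1)) ^ 4)⁻¹ := by
    set b : ℕ → ℂ := fun i => 2 * Complex.log (1 - t ^ (i + 1)) with hbdef
    have hb : Summable b := hsumlog.mul_left 2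
    have hbm : Summable (fun i => b (i + m)) := (_root_.summable_nat_add_iff m).mpr hb
    have hexp4 : ∀ i : ℕ, Complex.exp (-(2:ℂ) * b i) = ((1 - t ^ (i + 1)) ^ 4)⁻¹ := by
      intro i
      have heq : -(2:ℂ) * b i
          = -(Complex.log (1 - t ^ (i+1)) + (Complex.log (1 - t ^ (i+1))
            + (Complex.log (1 - t ^ (i+1)) + Complex.log (1 - t ^ (i+1))))) := by
        rw [hbdef]; ring
      rw [heq, Complex.exp_neg, Complex.exp_add, Complex.exp_add, Complex.exp_add,
        Complex.exp_log (hne i)]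
      ring
    have hRsum : HasSum (fun i => -(2:ℂ) * b i) (-(2:ℂ) * ∑' i, b i) := hb.hasSum.mul_left _
    have hRprod : (∏' i : ℕ, ((1 - t ^ (i + 1)) ^ 4)⁻¹)
        = Complex.exp (-(2:ℂ) * ∑' i, b i) := by
      have hp := hRsum.cexp
      have heq : (Complex.exp ∘ fun i => -(2:ℂ) * b i)
          = fun i => ((1 - t ^ (i + 1)) ^ 4)⁻¹ := funext fun i => hexp4 i
      rw [heq] at hp
      exact hp.tprod_eq
    -- compute tcS t (t^m)
    have hLtm : ∀ i : ℕ, tcLog t i (t ^ m) = b i + b (i + m) := by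
      intro i
      have hpow : t ^ (i + 1) * t ^ m = t ^ (i + m + 1) := by
        rw [← pow_add]
        congr 1
        omega
      simp only [tcLog, hpow]
      simp only [hbdef]
      ring
    have hStm : tcS t (t ^ m) = ∑' i, b i + ∑' i, b (i + m) := by
      have h1 := (hSsum (t ^ m) htmr).tsum_eq
      simp only [tcS]
      have h2 : (fun i => tcLog t i (t ^ m)) = fun i => b i + b (i + m) := funext hLtm
      rw [h2]
      exact Summable.tsum_add hb hbm
    have hshift : ∑ i ∈ Finset.range m, b i + ∑' i, b (i + m) = ∑' i, b i :=
      Summable.sum_add_tsum_nat_add m hb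
    -- the sum identity
    have hST : tcS t (t ^ m) + (-(2:ℂ) * ∑' i, b i) = -(∑ i ∈ Finset.range m, b i) := by
      rw [hStm]
      have : ∑' i, b (i + m) = ∑' i, b i - ∑ i ∈ Finset.range m, b i := by
        linear_combination hshift
      rw [this]
      ring
    -- P over range
    have hPrange : (∏ j ∈ Finset.Icc 1 m, (1 - t ^ j) ^ 2)
        = ∏ i ∈ Finset.range m, (1 - t ^ (i + 1)) ^ 2 := by
      rw [← Finset.Ico_add_one_right_eq_Icc, Finset.prod_Ico_eq_prod_range]
      exact Finset.prod_congr (by norm_num) (fun i _ => by rw [add_comm])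
    have hexpb : ∀ i : ℕ, Complex.exp (b i) = (1 - t ^ (i + 1)) ^ 2 := by
      intro i
      have : b i = Complex.log (1 - t ^ (i+1)) + Complex.log (1 - t ^ (i+1)) := by
        simp only [hbdef]; ring
      rw [this, Complex.exp_add, Complex.exp_log (hne i)]
      ring
    have hkey : (∏ j ∈ Finset.Icc 1 m, (1 - t ^ j) ^ 2) * Complex.exp (tcS t (t ^ m))
        * Complex.exp (-(2:ℂ) * ∑' i, b i) = 1 := by
      rw [mul_assoc, ← Complex.exp_add, hST, Complex.exp_neg, Complex.exp_sum]
      have : ∏ i ∈ Finset.range m, Complex.exp (b i)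
          = ∏ i ∈ Finset.range m, (1 - t ^ (i + 1)) ^ 2 :=
        Finset.prod_congr rfl (fun i _ => hexpb i)
      rw [this, hPrange]
      rw [mul_inv_cancel₀]
      rw [← hPrange]
      exact hP0
    simp only [tcF]
    rw [hQeq _ htmr, hRprod]
    exact inv_eq_of_mul_eq_one_right hkey
  rw [hstep]
  rw [← hFval]
  rw [← hCau]
  rw [smul_eq_mul]
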